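/- The function H : (0, 2M) → ℝ given by H(r_0) = (2 r_0 - 3M)/(3 √(r_0^3 (2M - r_0))) is strictly increasing, tends to -∞ as r_0 → 0+, and tends to +∞ as r_0 → 2M-. In particular, for every H ∈ ℝ there is a unique r_H ∈ (0, 2M) with H(r_H) = H. -/

import Mathlib

open Real Filter Set Topology

lemma stmt5_aux_deriv (M : ℝ) (hM : 0 < M) {r : ℝ} (hr : r ∈ Set.Ioo 0 (2 * M)) :
    ∃ d, HasDerivAt (fun r0 : ℝ =>
      (2 * r0 - 3 * M) / (3 * Real.sqrt (r0 ^ 3 * (2 * M - r0)))) d r ∧ 0 < d := by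
  obtain ⟨hr0, hr2⟩ := hr
  have hP : 0 < r ^ 3 * (2 * M - r) := mul_pos (pow_pos hr0 3) (by linarith)
  set s := Real.sqrt (r ^ 3 * (2 * M - r)) with hs_def
  have hs : 0 < s := Real.sqrt_pos.mpr hP
  have hs2 : s ^ 2 = r ^ 3 * (2 * M - r) := Real.sq_sqrt hP.le
  have hPd : HasDerivAt (fun x : ℝ => x ^ 3 * (2 * M - x))
      (3 * r ^ 2 * (2 * M - r) + r ^ 3 * (-1)) r := by
    have h1 : HasDerivAt (fun x : ℝ => x ^ 3) (3 * r ^ 2) r := by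
      simpa using hasDerivAt_pow 3 r
    have h2 : HasDerivAt (fun x : ℝ => 2 * M - x) (-1) r := by
      simpa using (hasDerivAt_id r).const_sub (2 * M)
    exact h1.mul h2
  have hsd : HasDerivAt (fun x : ℝ => Real.sqrt (x ^ 3 * (2 * M - x)))
      (1 / (2 * s) * (3 * r ^ 2 * (2 * M - r) + r ^ 3 * (-1))) r :=
    (Real.hasDerivAt_sqrt hP.ne').comp r hPd
  have hden : HasDerivAt (fun x : ℝ => 3 * Real.sqrt (x ^ 3 * (2 * M - x)))
      (3 * (1 / (2 * s) * (3 * r ^ 2 * (2 * M - r) + r ^ 3 * (-1)))) r := hsd.const_mul 3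
  have hnum : HasDerivAt (fun x : ℝ => 2 * x - 3 * M) 2 r := by
    simpa using ((hasDerivAt_id r).const_mul 2).sub_const (3 * M)
  have hdne : 3 * Real.sqrt (r ^ 3 * (2 * M - r)) ≠ 0 := by positivity
  refine ⟨_, hnum.div hden hdne, ?_⟩
  have key : 0 < 12 * s ^ 2 - 3 * (2 * r - 3 * M) *
      (3 * r ^ 2 * (2 * M - r) + r ^ 3 * (-1)) := by
    nlinarith [mul_pos (pow_pos hr0 2) (pow_pos hM 2),
      mul_nonneg (sq_nonneg r) (sq_nonneg (r - 2 * M))]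
  have hnum_pos : 0 < 2 * (3 * s) -
      (2 * r - 3 * M) * (3 * (1 / (2 * s) * (3 * r ^ 2 * (2 * M - r) + r ^ 3 * (-1)))) := by
    have heq : 2 * (3 * s) -
        (2 * r - 3 * M) * (3 * (1 / (2 * s) * (3 * r ^ 2 * (2 * M - r) + r ^ 3 * (-1))))
        = (12 * s ^ 2 - 3 * (2 * r - 3 * M) *
          (3 * r ^ 2 * (2 * M - r) + r ^ 3 * (-1))) / (2 * s) := by
      field_simp
      ring
    rw [heq]
    exact div_pos key (by positivity)
  exact div_pos hnum_pos (by positivity)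

theorem stmt5 (M : ℝ) (hM : 0 < M) :
    StrictMonoOn (fun r0 : ℝ => (2 * r0 - 3 * M) / (3 * Real.sqrt (r0 ^ 3 * (2 * M - r0))))
      (Set.Ioo 0 (2 * M)) ∧
    Filter.Tendsto (fun r0 : ℝ => (2 * r0 - 3 * M) / (3 * Real.sqrt (r0 ^ 3 * (2 * M - r0))))
      (nhdsWithin 0 (Set.Ioi 0)) Filter.atBot ∧
    Filter.Tendsto (fun r0 : ℝ => (2 * r0 - 3 * M) / (3 * Real.sqrt (r0 ^ 3 * (2 * M - r0))))
      (nhdsWithin (2 * M) (Set.Iio (2 * M))) Filter.atTop ∧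
    ∀ H : ℝ, ∃! r : ℝ, r ∈ Set.Ioo (0 : ℝ) (2 * M) ∧
      (2 * r - 3 * M) / (3 * Real.sqrt (r ^ 3 * (2 * M - r))) = H := by
  set f : ℝ → ℝ := fun r0 => (2 * r0 - 3 * M) / (3 * Real.sqrt (r0 ^ 3 * (2 * M - r0)))
    with hf_def
  have hcont : ContinuousOn f (Set.Ioo 0 (2 * M)) := fun x hx =>
    ((stmt5_aux_deriv M hM hx).choose_spec.1).continuousAt.continuousWithinAt
  have hmono : StrictMonoOn f (Set.Ioo 0 (2 * M)) := by
    apply strictMonoOn_of_deriv_pos (convex_Ioo _ _) hcont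
    intro x hx
    rw [interior_Ioo] at hx
    obtain ⟨d, hd, hdpos⟩ := stmt5_aux_deriv M hM hx
    rw [hd.deriv]; exact hdpos
  have hDcont : Continuous (fun r : ℝ => 3 * Real.sqrt (r ^ 3 * (2 * M - r))) :=
    continuous_const.mul (Real.continuous_sqrt.comp
      ((continuous_pow 3).mul (continuous_const.sub continuous_id)))
  -- limit at 0⁺
  have hDlim0 : Tendsto (fun r : ℝ => 3 * Real.sqrt (r ^ 3 * (2 * M - r))) (𝓝[>] 0) (𝓝[>] 0) := by
    rw [tendsto_nhdsWithin_iff]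
    constructor
    · have := (hDcont.tendsto 0).mono_left (nhdsWithin_le_nhds (s := Set.Ioi (0:ℝ)))
      simpa using this
    · filter_upwards [self_mem_nhdsWithin, eventually_nhdsWithin_of_eventually_nhds
        (isOpen_Iio.eventually_mem (show (0:ℝ) ∈ Set.Iio (2 * M) by simpa using (by linarith : (0:ℝ) < 2 * M)))] with r hr1 hr2
      have : 0 < r ^ 3 * (2 * M - r) := mul_pos (pow_pos hr1 3) (by simp only [Set.mem_Iio] at hr2; linarith)
      exact mul_pos three_pos (Real.sqrt_pos.mpr this)
  have hNlim0 : Tendsto (fun r : ℝ => 2 * r - 3 * M) (𝓝[>] (0:ℝ)) (𝓝 (-(3 * M))) := by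
    have hc : Continuous fun r : ℝ => 2 * r - 3 * M :=
      (continuous_const.mul continuous_id).sub continuous_const
    have := (hc.tendsto 0).mono_left (nhdsWithin_le_nhds (s := Set.Ioi (0:ℝ)))
    simpa using this
  have h1 : Tendsto f (𝓝[>] 0) atBot := by
    have := Filter.Tendsto.neg_mul_atTop (by linarith : -(3 * M) < 0) hNlim0
      hDlim0.inv_tendsto_nhdsGT_zero
    simpa [hf_def, div_eq_mul_inv] using this
  -- limit at (2M)⁻
  have hDlim2 : Tendsto (fun r : ℝ => 3 * Real.sqrt (r ^ 3 * (2 * M - r)))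
      (𝓝[<] (2 * M)) (𝓝[>] 0) := by
    rw [tendsto_nhdsWithin_iff]
    constructor
    · have := (hDcont.tendsto (2 * M)).mono_left (nhdsWithin_le_nhds (s := Set.Iio (2 * M)))
      simpa using this
    · filter_upwards [self_mem_nhdsWithin, eventually_nhdsWithin_of_eventually_nhds
        (isOpen_Ioi.eventually_mem (show (2 * M) ∈ Set.Ioi (0:ℝ) by simpa using (by linarith : (0:ℝ) < 2 * M)))] with r hr1 hr2
      have : 0 < r ^ 3 * (2 * M - r) := mul_pos (pow_pos hr2 3) (by simp only [Set.mem_Iio] at hr1; linarith)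
      exact mul_pos three_pos (Real.sqrt_pos.mpr this)
  have hNlim2 : Tendsto (fun r : ℝ => 2 * r - 3 * M) (𝓝[<] (2 * M)) (𝓝 M) := by
    have hc : Continuous fun r : ℝ => 2 * r - 3 * M :=
      (continuous_const.mul continuous_id).sub continuous_const
    have := (hc.tendsto (2 * M)).mono_left (nhdsWithin_le_nhds (s := Set.Iio (2 * M)))
    have h : 2 * (2 * M) - 3 * M = M := by ring
    simpa [h] using this
  have h2 : Tendsto f (𝓝[<] (2 * M)) atTop := by
    have := Filter.Tendsto.pos_mul_atTop hM hNlim2 hDlim2.inv_tendsto_nhdsGT_zero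
    simpa [hf_def, div_eq_mul_inv] using this
  refine ⟨hmono, h1, h2, ?_⟩
  intro H
  have hmemIoo0 : ∀ᶠ r in 𝓝[>] (0:ℝ), r ∈ Set.Ioo 0 (2 * M) := by
    filter_upwards [self_mem_nhdsWithin, eventually_nhdsWithin_of_eventually_nhds
      (isOpen_Iio.eventually_mem (show (0:ℝ) ∈ Set.Iio (2 * M) by simpa using (by linarith : (0:ℝ) < 2 * M)))] with r h h'
    exact ⟨h, h'⟩
  have hmemIoo2 : ∀ᶠ r in 𝓝[<] (2 * M), r ∈ Set.Ioo 0 (2 * M) := by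
    filter_upwards [self_mem_nhdsWithin, eventually_nhdsWithin_of_eventually_nhds
      (isOpen_Ioi.eventually_mem (show (2 * M) ∈ Set.Ioi (0:ℝ) by simpa using (by linarith : (0:ℝ) < 2 * M)))] with r h h'
    exact ⟨h', h⟩
  obtain ⟨a, haH, ha⟩ := ((h1.eventually (eventually_lt_atBot H)).and hmemIoo0).exists
  obtain ⟨b, hbH, hb⟩ := ((h2.eventually (eventually_gt_atTop H)).and hmemIoo2).exists
  have hab : a < b := by
    by_contra h
    push_neg at h
    have : f b ≤ f a := by
      rcases eq_or_lt_of_le h with h | h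
      · rw [h]
      · exact (hmono hb ha h).le
    linarith
  have hsub : Set.Icc a b ⊆ Set.Ioo 0 (2 * M) := Set.Icc_subset_Ioo ha.1 hb.2
  have hIVT := intermediate_value_Ioo hab.le (hcont.mono hsub)
  have hmem : H ∈ Set.Ioo (f a) (f b) := ⟨haH, hbH⟩
  obtain ⟨r, hrmem, hrH⟩ := hIVT hmem
  have hrIoo : r ∈ Set.Ioo 0 (2 * M) := hsub ⟨hrmem.1.le, hrmem.2.le⟩
  refine ⟨r, ⟨hrIoo, hrH⟩, ?_⟩
  rintro r' ⟨hr'Ioo, hr'H⟩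
  exact hmono.injOn hr'Ioo hrIoo (hr'H.trans hrH.symm)
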